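/- arXiv:1203.4022 — 2 statements merged into one kernel-verified Lean document; each statement's English description precedes it below -/
import Mathlib

section
/- Let K be a field of characteristic 0 equipped with a discrete valuation ν, with associated valuation ring O_ν ⊆ K. For any units a_1, …, a_n ∈ K^×, there exist b_1, …, b_n ∈ K^× such that b_1, …, b_{n−1} are units of the valuation ring O_ν and such that the n-fold Pfister forms ⟨⟨a_1, …, a_n⟩⟩ and ⟨⟨b_1, …, b_n⟩⟩ are isometric as quadratic forms over K. -/
/-- The `n`-fold Pfister form `⟨⟨a 0, …, a (n-1)⟩⟩ = ⟨1, -a 0⟩ ⊗ ⋯ ⊗ ⟨1, -a (n-1)⟩`,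
realized (via the canonical identification of the `n`-fold tensor product of copies of `K²`
with `K^(Fin n → Bool)`) as the diagonal quadratic form whose coefficient on the coordinate
indexed by `s : Fin n → Bool` is `∏ i, (if s i then -a i else 1)`, i.e. the product of
`-a i` over the subset `{i | s i}`. -/
noncomputable def pfisterForm {K : Type*} [Field K] {n : ℕ} (a : Fin n → K) :
    QuadraticForm K ((Fin n → Bool) → K) :=
  QuadraticMap.weightedSumSquares K
    (fun s : Fin n → Bool => ∏ i : Fin n, if s i then -a i else 1)

open QuadraticMap Finset

lemma wss_equiv {K : Type*} [Field K] {ι : Type*} [Fintype ι]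
    (w w' : ι → K) (σ : Equiv.Perm ι) (c : ι → K) (hc : ∀ s, c s ≠ 0)
    (h : ∀ s, w' s = w (σ s) * c s ^ 2) :
    (weightedSumSquares K w).Equivalent (weightedSumSquares K w') := by
  classical
  refine ⟨QuadraticMap.IsometryEquiv.mk
    { toFun := fun x s => (c s)⁻¹ * x (σ s)
      map_add' := by intro x y; funext s; simp [mul_add]
      map_smul' := by intro r x; funext s; simp [smul_eq_mul]; ring
      invFun := fun y t => c (σ.symm t) * y (σ.symm t)
      left_inv := by
        intro x; funext t
        simp only [Equiv.apply_symm_apply]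
        rw [mul_inv_cancel_left₀ (hc _)]
      right_inv := by
        intro y; funext s
        simp only [Equiv.symm_apply_apply]
        rw [inv_mul_cancel_left₀ (hc _)] } ?_⟩
  intro x
  simp only [weightedSumSquares_apply, LinearEquiv.coe_mk, smul_eq_mul]
  rw [← Equiv.sum_comp σ (fun t => w t * (x t * x t))]
  refine Finset.sum_congr rfl fun s _ => ?_
  rw [h s]
  have h2 : c s ^ 2 * (c s)⁻¹ ^ 2 = 1 := by
    rw [← mul_pow, mul_inv_cancel₀ (hc s), one_pow]
  calc w (σ s) * c s ^ 2 * ((c s)⁻¹ * x (σ s) * ((c s)⁻¹ * x (σ s)))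
      = w (σ s) * (x (σ s) * x (σ s)) * (c s ^ 2 * (c s)⁻¹ ^ 2) := by ring
    _ = _ := by rw [h2, mul_one]

lemma pfister_smul_sq {K : Type*} [Field K] {n : ℕ} (a c : Fin n → K) (hc : ∀ i, c i ≠ 0) :
    (pfisterForm a).Equivalent (pfisterForm (fun i => a i * c i ^ 2)) := by
  classical
  refine wss_equiv _ _ (Equiv.refl _) (fun s => ∏ i, if s i then c i else 1) ?_ ?_
  · intro s
    exact Finset.prod_ne_zero_iff.2 fun i _ => by split <;> simp [hc i]
  · intro s
    simp only [Equiv.refl_apply]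
    rw [← Finset.prod_pow, ← Finset.prod_mul_distrib]
    refine Finset.prod_congr rfl fun i _ => ?_
    by_cases hsi : s i = true <;> simp [hsi] <;> ring

lemma pfister_perm {K : Type*} [Field K] {n : ℕ} (a : Fin n → K) (σ : Equiv.Perm (Fin n)) :
    (pfisterForm a).Equivalent (pfisterForm (a ∘ σ)) := by
  classical
  refine wss_equiv _ _ (Equiv.arrowCongr σ (Equiv.refl Bool)) (fun _ => 1)
    (fun _ => one_ne_zero) ?_
  intro s
  rw [one_pow, mul_one]
  refine Fintype.prod_equiv σ _ _ fun i => ?_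
  simp [Equiv.arrowCongr]

lemma pfister_flip {K : Type*} [Field K] {n : ℕ} (a : Fin n → K) (i j : Fin n) (hij : i ≠ j)
    (hai : a i ≠ 0) :
    (pfisterForm a).Equivalent (pfisterForm (Function.update a j (-(a i) * a j))) := by
  classical
  set f : (Fin n → Bool) → (Fin n → Bool) :=
    fun s => Function.update s i (xor (s i) (s j)) with hf
  have hinv : Function.Involutive f := by
    intro s; funext k
    simp only [f]
    by_cases hk : k = i
    · subst hk
      simp only [Function.update_self, Function.update_of_ne hij.symm]
      cases s k <;> cases s j <;> rfl
    · simp [Function.update_of_ne hk]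
  refine wss_equiv _ _ (Function.Involutive.toPerm f hinv)
    (fun s => if s i && s j then a i else 1) ?_ ?_
  · intro s; split <;> simp [hai]
  · intro s
    have hfs : (Function.Involutive.toPerm f hinv) s = f s := rfl
    rw [hfs]
    have hτi : f s i = xor (s i) (s j) := by simp [f]
    have hτj : f s j = s j := by simp [f, Function.update_of_ne hij.symm]
    have hτ : ∀ k, k ≠ i → f s k = s k := by
      intro k hk
      simp [f, Function.update_of_ne hk]
    have hji : j ∈ (univ : Finset (Fin n)).erase i := by simp [hij.symm]
    rw [← Finset.prod_erase_mul _ _ (Finset.mem_univ i),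
        ← Finset.prod_erase_mul _ _ hji,
        ← Finset.prod_erase_mul _ (fun k => if f s k then -a k else 1)
          (Finset.mem_univ i),
        ← Finset.prod_erase_mul _ (fun k => if f s k then -a k else 1) hji]
    have hprod : ∏ k ∈ ((univ : Finset (Fin n)).erase i).erase j,
        (if s k then -Function.update a j (-a i * a j) k else 1)
        = ∏ k ∈ ((univ : Finset (Fin n)).erase i).erase j,
          (if f s k then -a k else 1) := by
      refine Finset.prod_congr rfl fun k hk => ?_
      have hki : k ≠ i := Finset.ne_of_mem_erase (Finset.mem_of_mem_erase hk)
      have hkj : k ≠ j := Finset.ne_of_mem_erase hk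
      rw [hτ k hki, Function.update_of_ne hkj]
    rw [hprod, hτi, hτj, Function.update_self, Function.update_of_ne hij]
    cases hsi : s i <;> cases hsj : s j <;> simp [hsi, hsj] <;> ring

lemma norm_entry {K : Type*} [Field K] (O : Subring K) [IsDomain O] [IsDiscreteValuationRing O]
    [IsFractionRing O K] (ϖ : O) (hϖ : Irreducible ϖ) (x : K) (hx : x ≠ 0) :
    ∃ c : K, c ≠ 0 ∧ ((∃ u : Oˣ, x * c ^ 2 = ((u : O) : K)) ∨
      (∃ u : Oˣ, x * c ^ 2 = ((ϖ : O) : K) * ((u : O) : K))) := by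
  obtain ⟨⟨p, q⟩, hpq⟩ := IsLocalization.surj (nonZeroDivisors O) x
  simp only at hpq
  have hq0 : (q : O) ≠ 0 := nonZeroDivisors.coe_ne_zero q
  have hqK : (algebraMap O K) (q : O) ≠ 0 := by
    simpa using (IsFractionRing.to_map_eq_zero_iff (R := O) (K := K)).not.2 hq0
  have hp0 : p ≠ 0 := by
    rintro rfl
    apply hx
    have := hpq
    rw [map_zero] at this
    exact (mul_eq_zero.mp this).resolve_right hqK
  have hϖ0 : (ϖ : O) ≠ 0 := hϖ.ne_zero
  have hϖK : ((ϖ : O) : K) ≠ 0 := by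
    simpa using (IsFractionRing.to_map_eq_zero_iff (R := O) (K := K)).not.2 hϖ0
  obtain ⟨m, u, hy⟩ := IsDiscreteValuationRing.eq_unit_mul_pow_irreducible
    (mul_ne_zero hp0 hq0) hϖ
  have key : x * ((algebraMap O K) (q : O)) ^ 2 = ((u : O) : K) * ((ϖ : O) : K) ^ m := by
    have : x * ((algebraMap O K) (q : O)) ^ 2 = (algebraMap O K) (p * (q : O)) := by
      rw [map_mul, ← hpq]; ring
    rw [this, hy, map_mul, map_pow]
    rfl
  rcases Nat.even_or_odd m with ⟨t, ht⟩ | ⟨t, ht⟩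
  · refine ⟨(algebraMap O K) (q : O) * (((ϖ : O) : K) ^ t)⁻¹, mul_ne_zero hqK (inv_ne_zero (pow_ne_zero _ hϖK)), Or.inl ⟨u, ?_⟩⟩
    rw [mul_pow, ← mul_assoc, key, ht]
    field_simp
    ring
  · refine ⟨(algebraMap O K) (q : O) * (((ϖ : O) : K) ^ t)⁻¹, mul_ne_zero hqK (inv_ne_zero (pow_ne_zero _ hϖK)), Or.inr ⟨u, ?_⟩⟩
    rw [mul_pow, ← mul_assoc, key, ht]
    field_simp
    ring

lemma coe_unit_ne_zero {K : Type*} [Field K] (O : Subring K) (u : Oˣ) : ((u : O) : K) ≠ 0 := by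
  simp only [ne_eq, ZeroMemClass.coe_eq_zero]
  exact Units.ne_zero u

lemma pfister_reduce {K : Type*} [Field K] {n : ℕ} (O : Subring K)
    (ϖ : O) (hϖK : ((ϖ : O) : K) ≠ 0)
    (S : Finset (Fin n)) (b : Fin n → K)
    (hunit : ∀ i ∉ S, ∃ u : Oˣ, ((u : O) : K) = b i)
    (hpi : ∀ i ∈ S, ∃ u : Oˣ, b i = ((ϖ : O) : K) * ((u : O) : K)) :
    ∃ b' : Fin n → K, (∀ i, b' i ≠ 0) ∧
      (∀ i : Fin n, (i : ℕ) + 1 < n → ∃ u : Oˣ, ((u : O) : K) = b' i) ∧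
      (pfisterForm b).Equivalent (pfisterForm b') := by
  classical
  induction S using Finset.strongInduction generalizing b with
  | _ S ih =>
  have hbne : ∀ k, b k ≠ 0 := by
    intro k
    by_cases hk : k ∈ S
    · obtain ⟨u, hu⟩ := hpi k hk
      rw [hu]; exact mul_ne_zero hϖK (coe_unit_ne_zero O u)
    · obtain ⟨u, hu⟩ := hunit k hk
      rw [← hu]; exact coe_unit_ne_zero O u
  by_cases h2 : 2 ≤ S.card
  · obtain ⟨i, hi, j, hj, hij⟩ := Finset.one_lt_card.mp h2
    obtain ⟨u, hu⟩ := hpi i hi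
    obtain ⟨v, hv⟩ := hpi j hj
    set b' : Fin n → K := Function.update b j ((((-(u * v) : Oˣ) : O) : K)) with hb'
    have e1 := pfister_flip b i j hij (hbne i)
    have e2 := pfister_smul_sq (Function.update b j (-(b i) * b j))
      (fun k => if k = j then (((ϖ : O) : K))⁻¹ else 1)
      (fun k => by split <;> simp [hϖK])
    have heq : (fun k => Function.update b j (-(b i) * b j) k *
        (if k = j then (((ϖ : O) : K))⁻¹ else 1) ^ 2) = b' := by
      funext k
      by_cases hk : k = j
      · subst hk
        rw [Function.update_self, if_pos rfl, hb', Function.update_self, hu, hv]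
        push_cast
        field_simp
      · rw [Function.update_of_ne hk, if_neg hk, one_pow, mul_one, hb',
          Function.update_of_ne hk]
    rw [heq] at e2
    obtain ⟨b'', h1, h2', h3⟩ := ih (S.erase j) (Finset.erase_ssubset hj) b'
      (fun k hk => by
        by_cases hkj : k = j
        · subst hkj
          exact ⟨-(u * v), by rw [hb', Function.update_self]⟩
        · have hkS : k ∉ S := fun hkS => hk (Finset.mem_erase.mpr ⟨hkj, hkS⟩)
          obtain ⟨w, hw⟩ := hunit k hkS
          exact ⟨w, by rw [hb', Function.update_of_ne hkj]; exact hw⟩)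
      (fun k hk => by
        obtain ⟨hkj, hkS⟩ := Finset.mem_erase.mp hk
        obtain ⟨w, hw⟩ := hpi k hkS
        exact ⟨w, by rw [hb', Function.update_of_ne hkj]; exact hw⟩)
    exact ⟨b'', h1, h2', (e1.trans e2).trans h3⟩
  · by_cases hSe : S = ∅
    · subst hSe
      exact ⟨b, hbne, fun k _ => hunit k (by simp), QuadraticMap.Equivalent.refl _⟩
    · obtain ⟨i, hiS⟩ := Finset.nonempty_iff_ne_empty.mpr hSe
      have hSi : ∀ k ∈ S, k = i := by
        intro k hk
        by_contra hki
        exact absurd (Finset.one_lt_card.mpr ⟨k, hk, i, hiS, hki⟩) (by omega)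
      have hn : 0 < n := i.pos
      set last : Fin n := ⟨n - 1, by omega⟩ with hlast
      set σ := Equiv.swap i last with hσ
      refine ⟨b ∘ σ, fun k => hbne _, ?_, pfister_perm b σ⟩
      intro k hk
      have hklast : k ≠ last := by
        intro h
        have : (k : ℕ) = n - 1 := by rw [h]
        omega
      by_cases hki : k = i
      · have hσk : σ k = last := by
          rw [hσ, hki]; exact Equiv.swap_apply_left _ _
        have hlS : last ∉ S := fun h =>
          hklast (hki.trans (hSi last h).symm)
        obtain ⟨w, hw⟩ := hunit last hlS
        exact ⟨w, by rw [Function.comp_apply, hσk]; exact hw⟩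
      · have hσk : σ k = k := by
          rw [hσ]; exact Equiv.swap_apply_of_ne_of_ne hki hklast
        have hkS : k ∉ S := fun h => hki (hSi k h)
        obtain ⟨w, hw⟩ := hunit k hkS
        exact ⟨w, by rw [Function.comp_apply, hσk]; exact hw⟩

/-- Let `K` be a field of characteristic `0` and let `O ⊆ K` be a discrete valuation ring
with fraction field `K` (the valuation ring of a discrete valuation `ν` on `K`).  For any
`a 0, …, a (n-1) ∈ Kˣ` there exist `b 0, …, b (n-1) ∈ Kˣ` such that all but the last one,
i.e. `b 0, …, b (n-2)`, are units of the valuation ring `O`, and such that the `n`-fold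
Pfister forms `⟨⟨a 0, …, a (n-1)⟩⟩` and `⟨⟨b 0, …, b (n-1)⟩⟩` are isometric over `K`. -/
theorem pfister_form_unit_entries {K : Type*} [Field K] [CharZero K]
    (O : Subring K) [IsDomain O] [IsDiscreteValuationRing O] [IsFractionRing O K]
    (n : ℕ) (a : Fin n → K) (ha : ∀ i, a i ≠ 0) :
    ∃ b : Fin n → K, (∀ i, b i ≠ 0) ∧
      (∀ i : Fin n, (i : ℕ) + 1 < n → ∃ u : Oˣ, ((u : O) : K) = b i) ∧
      QuadraticMap.Equivalent (pfisterForm a) (pfisterForm b) := by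
  classical
  obtain ⟨ϖ, hϖ⟩ := IsDiscreteValuationRing.exists_irreducible O
  have hϖK : ((ϖ : O) : K) ≠ 0 := by
    simp only [ne_eq, ZeroMemClass.coe_eq_zero]
    exact hϖ.ne_zero
  choose c hc hdis using fun i => norm_entry O ϖ hϖ (a i) (ha i)
  have e0 := pfister_smul_sq a c hc
  set b0 : Fin n → K := fun i => a i * c i ^ 2 with hb0
  set S : Finset (Fin n) :=
    Finset.univ.filter (fun i => ¬ ∃ u : Oˣ, ((u : O) : K) = b0 i) with hS
  obtain ⟨b', h1, h2, h3⟩ := pfister_reduce O ϖ hϖK S b0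
    (fun i hi => by
      simp only [hS, Finset.mem_filter, Finset.mem_univ, true_and, not_not] at hi
      exact hi)
    (fun i hi => by
      simp only [hS, Finset.mem_filter, Finset.mem_univ, true_and] at hi
      rcases hdis i with h | h
      · exact absurd ⟨h.choose, h.choose_spec.symm⟩ hi
      · exact h)
  exact ⟨b', h1, h2, e0.trans h3⟩
end

section
/- Let ℓ be a prime number, let n ≥ 2 be an integer, and let V be a 2n-dimensional vector space over the field F_ℓ = ℤ/ℓℤ with basis v_1, …, v_{2n}. Then the element ω = v_1 ∧ ⋯ ∧ v_n + v_{n+1} ∧ ⋯ ∧ v_{2n} of the n-th exterior power Λ^n V is not equal to v ∧ w for any vector v ∈ V and any element w ∈ Λ^{n−1} V. Consequently, if S ⊆ Λ^n V denotes the one-dimensional subspace spanned by ω, then the subgroup S_dec of S generated by the elements of S of the form v ∧ w with v ∈ V and w ∈ Λ^{n−1} V is a proper subgroup: S_dec ≠ S. -/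
open ExteriorAlgebra

set_option maxHeartbeats 1000000

/-- The linear functional on the exterior algebra of `Fin N → R` that, in degree `k`,
computes the determinant of the matrix of coordinates selected by `σ`. -/
noncomputable def detCoordLift (R : Type*) [CommRing R] {N : ℕ} (k : ℕ)
    (σ : Fin k → Fin N) : ExteriorAlgebra R (Fin N → R) →ₗ[R] R :=
  ExteriorAlgebra.liftAlternating (fun i =>
    if h : i = k then
      h ▸ ((Matrix.detRowAlternating : (Fin k → R) [⋀^Fin k]→ₗ[R] R).compLinearMap
        (LinearMap.funLeft R R σ))
    else 0)

lemma detCoordLift_ιMulti (R : Type*) [CommRing R] {N k : ℕ} (σ : Fin k → Fin N)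
    (v : Fin k → (Fin N → R)) :
    detCoordLift R k σ (ιMulti R k v) =
      Matrix.det (Matrix.of fun a b => v a (σ b)) := by
  rw [detCoordLift, ExteriorAlgebra.liftAlternating_apply_ιMulti, dif_pos rfl]
  rfl

lemma ι_mul_ιMulti (R : Type*) [CommRing R] {M : Type*} [AddCommGroup M] [Module R M]
    (v : M) {n : ℕ} (g : Fin n → M) :
    ι R v * ιMulti R n g = ιMulti R (n + 1) (Fin.cons v g) := by
  rw [ExteriorAlgebra.ιMulti_succ_apply, Fin.cons_zero]
  congr 1

/-- Determinant of the "identity-like" coordinate matrix of basis vectors. -/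
lemma detA {K : Type*} [CommRing K] {N k : ℕ} (f : Fin k → Fin N)
    (hf : Function.Injective f) :
    Matrix.det (Matrix.of fun a b => (Pi.single (f a) (1 : K) : Fin N → K) (f b)) = 1 := by
  have h : (Matrix.of fun a b => (Pi.single (f a) (1 : K) : Fin N → K) (f b)) =
      (1 : Matrix (Fin k) (Fin k) K) := by
    ext a b
    rw [Matrix.of_apply, Pi.single_apply, Matrix.one_apply]
    by_cases h : a = b
    · subst h; simp
    · rw [if_neg (fun hh => h (hf hh).symm), if_neg h]
  rw [h, Matrix.det_one]

/-- Determinant of coordinate matrix of basis vectors with a completely missed row. -/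
lemma detE {K : Type*} [CommRing K] {N k : ℕ} (f g : Fin k → Fin N) (a0 : Fin k)
    (h : ∀ b, f b ≠ g a0) :
    Matrix.det (Matrix.of fun a b => (Pi.single (g a) (1 : K) : Fin N → K) (f b)) = 0 := by
  refine Matrix.det_eq_zero_of_row_eq_zero a0 fun b => ?_
  rw [Matrix.of_apply, Pi.single_apply, if_neg (h b)]

/-- The upper-triangular determinant extracting a coordinate of `v`. -/
lemma detC {K : Type*} [CommRing K] {N k : ℕ} (v : Fin N → K) (j : Fin N)
    (f : Fin k → Fin N) (hf : Function.Injective f) (hj : ∀ a, f a ≠ j) :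
    Matrix.det (Matrix.of fun a b =>
      (Fin.cons v (fun i => (Pi.single (f i) (1 : K) : Fin N → K)) : Fin (k+1) → Fin N → K) a
        ((Fin.cons j f : Fin (k+1) → Fin N) b)) = v j := by
  rw [Matrix.det_of_upperTriangular]
  · rw [Fin.prod_univ_succ]
    have h1 : ∀ i : Fin k, (Matrix.of fun a b =>
        (Fin.cons v (fun i => (Pi.single (f i) (1 : K) : Fin N → K)) : Fin (k+1) → Fin N → K) a
          ((Fin.cons j f : Fin (k+1) → Fin N) b)) i.succ i.succ = 1 := by
      intro i
      simp [Pi.single_apply]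
    simp only [h1, Finset.prod_const_one, mul_one]
    simp
  · intro a b hab
    rcases Fin.eq_zero_or_eq_succ a with rfl | ⟨a', rfl⟩
    · exact absurd hab (by simp)
    rcases Fin.eq_zero_or_eq_succ b with rfl | ⟨b', rfl⟩
    · simp only [Matrix.of_apply, Fin.cons_succ, Fin.cons_zero, Pi.single_apply]
      exact if_neg fun hh => hj a' hh.symm
    · simp only [Matrix.of_apply, Fin.cons_succ, Pi.single_apply]
      refine if_neg fun hh => ?_
      cases hf hh
      simp at hab
  
/-- The zero determinant: one of the basis-vector rows misses all selected coordinates. -/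
lemma detD {K : Type*} [CommRing K] {N k : ℕ} (v : Fin N → K) (j : Fin N)
    (f g : Fin k → Fin N) (a0 : Fin k) (h1 : g a0 ≠ j) (h2 : ∀ b, f b ≠ g a0) :
    Matrix.det (Matrix.of fun a b =>
      (Fin.cons v (fun i => (Pi.single (g i) (1 : K) : Fin N → K)) : Fin (k+1) → Fin N → K) a
        ((Fin.cons j f : Fin (k+1) → Fin N) b)) = 0 := by
  refine Matrix.det_eq_zero_of_row_eq_zero a0.succ fun b => ?_
  rcases Fin.eq_zero_or_eq_succ b with rfl | ⟨b', rfl⟩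
  · simp only [Matrix.of_apply, Fin.cons_succ, Fin.cons_zero, Pi.single_apply]
    exact if_neg fun hh => h1 hh.symm
  · simp only [Matrix.of_apply, Fin.cons_succ, Pi.single_apply]
    exact if_neg (h2 b')

/-- Let `ℓ` be a prime, `n ≥ 2`, and let `V = (ZMod ℓ)^(2n)` with standard basis
`e i = Pi.single i 1`. Consider `ω = e 0 ∧ ⋯ ∧ e (n-1) + e n ∧ ⋯ ∧ e (2n-1) ∈ Λⁿ V`.
Then `ω` is not of the form `v ∧ w` with `v ∈ V` and `w ∈ Λ^{n-1} V`; consequently,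
if `S ⊆ Λⁿ V` is the line spanned by `ω`, the subgroup `S_dec` of `S` generated by the
elements of `S` of the form `v ∧ w` is a proper subgroup of `S`. -/
theorem omega_not_decomposable (ℓ : ℕ) (hℓ : ℓ.Prime) (n : ℕ) (hn : 2 ≤ n) :
    ∀ (e : Fin (2 * n) → (Fin (2 * n) → ZMod ℓ)), e = (fun i => Pi.single i 1) →
    ∀ ω : ExteriorAlgebra (ZMod ℓ) (Fin (2 * n) → ZMod ℓ),
    ω = ExteriorAlgebra.ιMulti (ZMod ℓ) n (fun i : Fin n => e ⟨(i : ℕ), by omega⟩) +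
        ExteriorAlgebra.ιMulti (ZMod ℓ) n (fun i : Fin n => e ⟨n + (i : ℕ), by omega⟩) →
    (¬ ∃ (v : Fin (2 * n) → ZMod ℓ)
         (w : ExteriorAlgebra (ZMod ℓ) (Fin (2 * n) → ZMod ℓ)),
         w ∈ ⋀[ZMod ℓ]^(n - 1) (Fin (2 * n) → ZMod ℓ) ∧
         ω = ExteriorAlgebra.ι (ZMod ℓ) v * w) ∧
    Submodule.span (ZMod ℓ)
        {x : ExteriorAlgebra (ZMod ℓ) (Fin (2 * n) → ZMod ℓ) |
          x ∈ Submodule.span (ZMod ℓ) ({ω} : Set _) ∧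
          ∃ (v : Fin (2 * n) → ZMod ℓ)
            (w : ExteriorAlgebra (ZMod ℓ) (Fin (2 * n) → ZMod ℓ)),
            w ∈ ⋀[ZMod ℓ]^(n - 1) (Fin (2 * n) → ZMod ℓ) ∧
            x = ExteriorAlgebra.ι (ZMod ℓ) v * w}
      ≠ Submodule.span (ZMod ℓ) ({ω} : Set _) := by
  intro e he ω hω
  haveI : Fact ℓ.Prime := ⟨hℓ⟩
  haveI : Fact (1 < ℓ) := ⟨hℓ.one_lt⟩
  subst he
  have hB1inj : Function.Injective (fun i : Fin n => (⟨(i : ℕ), by omega⟩ : Fin (2 * n))) := by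
    intro a b h
    simp only [Fin.mk.injEq] at h
    exact Fin.ext h
  have hB2inj : Function.Injective (fun i : Fin n => (⟨n + (i : ℕ), by omega⟩ : Fin (2 * n))) := by
    intro a b h
    simp only [Fin.mk.injEq] at h
    exact Fin.ext (by omega)
  have hωval : detCoordLift (ZMod ℓ) n (fun i : Fin n => (⟨(i : ℕ), by omega⟩ : Fin (2 * n))) ω
      = 1 := by
    rw [hω, map_add, detCoordLift_ιMulti, detCoordLift_ιMulti]
    rw [detA _ hB1inj,
      detE _ (fun i : Fin n => (⟨n + (i : ℕ), by omega⟩ : Fin (2 * n))) ⟨0, by omega⟩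
        (fun b => by simp only [ne_eq, Fin.mk.injEq]; omega),
      add_zero]
  have hωne : ω ≠ 0 := fun h => by simp [h] at hωval
  have key : ¬ ∃ (v : Fin (2 * n) → ZMod ℓ)
      (w : ExteriorAlgebra (ZMod ℓ) (Fin (2 * n) → ZMod ℓ)),
      w ∈ ⋀[ZMod ℓ]^(n - 1) (Fin (2 * n) → ZMod ℓ) ∧
      ω = ExteriorAlgebra.ι (ZMod ℓ) v * w := by
    rintro ⟨v, w, -, hvw⟩
    have hann : ι (ZMod ℓ) v * ω = 0 := by
      rw [hvw, ← mul_assoc, ι_sq_zero, zero_mul]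
    have hann' : ιMulti (ZMod ℓ) (n + 1)
          (Fin.cons v (fun i : Fin n => Pi.single (⟨(i : ℕ), by omega⟩ : Fin (2 * n)) 1)) +
        ιMulti (ZMod ℓ) (n + 1)
          (Fin.cons v (fun i : Fin n => Pi.single (⟨n + (i : ℕ), by omega⟩ : Fin (2 * n)) 1))
        = 0 := by
      rw [← ι_mul_ιMulti, ← ι_mul_ιMulti, ← mul_add, ← hω, hann]
    have hv : v = 0 := by
      funext j
      show v j = 0
      by_cases hj : n ≤ (j : ℕ)
      · have hc := congrArg (detCoordLift (ZMod ℓ) (n + 1)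
          (Fin.cons j (fun i : Fin n => (⟨(i : ℕ), by omega⟩ : Fin (2 * n))))) hann'
        rw [map_zero, map_add, detCoordLift_ιMulti, detCoordLift_ιMulti] at hc
        rw [detC v j _ hB1inj (fun a => by simp only [ne_eq, Fin.ext_iff]; omega)] at hc
        rw [detD v j _ _ (if (j : ℕ) = n then (⟨1, by omega⟩ : Fin n) else ⟨0, by omega⟩)
          (by split <;> (simp only [ne_eq, Fin.ext_iff]; omega))
          (fun b => by split <;> (simp only [ne_eq, Fin.ext_iff]; omega))] at hc
        rw [add_zero] at hc
        exact hc
      · push_neg at hj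
        have hc := congrArg (detCoordLift (ZMod ℓ) (n + 1)
          (Fin.cons j (fun i : Fin n => (⟨n + (i : ℕ), by omega⟩ : Fin (2 * n))))) hann'
        rw [map_zero, map_add, detCoordLift_ιMulti, detCoordLift_ιMulti] at hc
        rw [detD v j _ _ (if (j : ℕ) = 0 then (⟨1, by omega⟩ : Fin n) else ⟨0, by omega⟩)
          (by split <;> (simp only [ne_eq, Fin.ext_iff]; omega))
          (fun b => by split <;> (simp only [ne_eq, Fin.ext_iff]; omega))] at hc
        rw [detC v j _ hB2inj (fun a => by simp only [ne_eq, Fin.ext_iff]; omega),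
          zero_add] at hc
        exact hc
    rw [hv, map_zero, zero_mul] at hvw
    exact hωne hvw
  refine ⟨key, ?_⟩
  intro hspan
  have hbot : Submodule.span (ZMod ℓ)
      {x : ExteriorAlgebra (ZMod ℓ) (Fin (2 * n) → ZMod ℓ) |
        x ∈ Submodule.span (ZMod ℓ) ({ω} : Set _) ∧
        ∃ (v : Fin (2 * n) → ZMod ℓ)
          (w : ExteriorAlgebra (ZMod ℓ) (Fin (2 * n) → ZMod ℓ)),
          w ∈ ⋀[ZMod ℓ]^(n - 1) (Fin (2 * n) → ZMod ℓ) ∧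
          x = ExteriorAlgebra.ι (ZMod ℓ) v * w} = ⊥ := by
    rw [Submodule.span_eq_bot]
    rintro x ⟨hx, v, w, hw, hxvw⟩
    rw [Submodule.mem_span_singleton] at hx
    obtain ⟨c, rfl⟩ := hx
    rcases eq_or_ne c 0 with rfl | hc
    · simp
    · exfalso
      apply key
      refine ⟨c⁻¹ • v, w, hw, ?_⟩
      rw [map_smul, smul_mul_assoc, ← hxvw, smul_smul, inv_mul_cancel₀ hc, one_smul]
  rw [hbot] at hspan
  exact hωne (Submodule.span_singleton_eq_bot.mp hspan.symm)
end
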